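/- Let 1 < p < 2 and μ > 1 be real numbers and let β̃ ≥ (p−1)·μ^{(p−2)/(2(p−1))}. Then there is no real number τ ∈ (0, +∞) satisfying simultaneously p·τ^{2p−2} − 2β̃·τ^p = μ(2−p) and μ + β̃·τ^p − β̃·τ^{p−2} − τ^{2p−2} = 0. -/

import Mathlib

open Real

/-- Strict weighted AM-GM for two terms. -/
lemma amgm_strict {x y a b : ℝ} (hx : 0 < x) (hy : 0 < y) (ha : 0 < a) (hb : 0 < b)
    (hab : a + b = 1) (hxy : x ≠ y) : x ^ a * y ^ b < a * x + b * y := by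
  have ha1 : a < 1 := by linarith
  have hdiv : 0 < x / y := div_pos hx hy
  have hne : x / y - 1 ≠ 0 := by
    intro h
    apply hxy
    have : x / y = 1 := by linarith
    field_simp at this
    linarith
  have hbern : (1 + (x / y - 1)) ^ a < 1 + a * (x / y - 1) :=
    rpow_one_add_lt_one_add_mul_self (by linarith) hne ha ha1
  have hxy' : (1 + (x / y - 1)) = x / y := by ring
  rw [hxy'] at hbern
  have hkey : (x / y) ^ a * y < (1 + a * (x / y - 1)) * y :=
    mul_lt_mul_of_pos_right hbern hy
  have hl : (x / y) ^ a * y = x ^ a * y ^ b := by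
    rw [Real.div_rpow hx.le hy.le]
    have hb1 : b = 1 - a := by linarith
    rw [hb1, Real.rpow_sub hy, Real.rpow_one]
    field_simp
  have hr : (1 + a * (x / y - 1)) * y = a * x + b * y := by
    have hb1 : b = 1 - a := by linarith
    field_simp [hb1]
    rw [hb1]; ring
  rw [hl, hr] at hkey
  exact hkey

/-- Case (B4): for `1 < p < 2`, `μ > 1` and `β̃ ≥ (p-1)μ^{(p-2)/(2(p-1))}`,
the system `p·τ^{2p-2} - 2β̃·τ^p = μ(2-p)`, `μ + β̃·τ^p - β̃·τ^{p-2} - τ^{2p-2} = 0`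
has no solution `τ ∈ (0, +∞)`. -/
theorem no_solution_B4 (p μ β : ℝ) (hp1 : 1 < p) (hp2 : p < 2) (hμ : 1 < μ)
    (hβ : (p - 1) * μ ^ ((p - 2) / (2 * (p - 1))) ≤ β) :
    ¬ ∃ τ : ℝ, 0 < τ ∧
      p * τ ^ (2 * p - 2) - 2 * β * τ ^ p = μ * (2 - p) ∧
      μ + β * τ ^ p - β * τ ^ (p - 2) - τ ^ (2 * p - 2) = 0 := by
  rintro ⟨τ, hτ, h1, h2⟩
  have hp1' : (0:ℝ) < p - 1 := by linarith
  have h2p : (0:ℝ) < 2 - p := by linarith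
  have hppos : (0:ℝ) < p := by linarith
  have hμ0 : (0:ℝ) < μ := by linarith
  have hBpos : 0 < τ ^ p := Real.rpow_pos_of_pos hτ p
  have hCpos : 0 < τ ^ (p-2) := Real.rpow_pos_of_pos hτ (p-2)
  have hApos : 0 < τ ^ (2*p-2) := Real.rpow_pos_of_pos hτ (2*p-2)
  have hspos : 0 < τ ^ (2:ℝ) := Real.rpow_pos_of_pos hτ 2
  have hA : τ ^ (2*p-2) = τ ^ p * τ ^ (p-2) := by
    rw [← Real.rpow_add hτ]; ring_nf
  have hBs : τ ^ p = τ ^ (p-2) * τ ^ (2:ℝ) := by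
    rw [← Real.rpow_add hτ]; ring_nf
  rw [hA] at h1 h2
  -- the two algebraic consequences
  have hβ' : β * (p * τ^p + (2-p) * τ^(p-2)) = (2*p-2) * (τ^p * τ^(p-2)) := by
    linear_combination (-1) * h1 - (2-p) * h2
  have hμ' : μ * (p * τ^p + (2-p) * τ^(p-2)) =
      (τ^p * τ^(p-2)) * ((2-p) * τ^p + p * τ^(p-2)) := by
    linear_combination (p * τ^p + (2-p) * τ^(p-2)) * h2 + (τ^(p-2) - τ^p) * hβ'
  -- cancel a factor τ^(p-2)
  have hbr : β * (p * τ^(2:ℝ) + (2-p)) = (2*p-2) * τ^p := by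
    have hc : τ^(p-2) * (β * (p * τ^(2:ℝ) + (2-p))) = τ^(p-2) * ((2*p-2) * τ^p) := by
      linear_combination hβ' - β * p * hBs
    exact mul_left_cancel₀ (ne_of_gt hCpos) hc
  have hAs : τ ^ (2*p-2) = τ^(p-2) * τ^(p-2) * τ^(2:ℝ) := by
    rw [hA, hBs]; ring
  have hμr : μ * (p * τ^(2:ℝ) + (2-p)) = τ^(2*p-2) * ((2-p) * τ^(2:ℝ) + p) := by
    have hμ2 := hμ'
    rw [hBs] at hμ2
    rw [hAs]
    have hc : τ^(p-2) * (μ * (p * τ^(2:ℝ) + (2-p))) =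
        τ^(p-2) * (τ^(p-2) * τ^(p-2) * τ^(2:ℝ) * ((2-p) * τ^(2:ℝ) + p)) := by
      linear_combination hμ2
    exact mul_left_cancel₀ (ne_of_gt hCpos) hc
  -- notation
  set s := τ ^ (2:ℝ) with hsdef
  set X := (2-p) * s + p with hXdef
  set Y := p * s + (2-p) with hYdef
  have hX : 0 < X := by positivity
  have hY : 0 < Y := by positivity
  set k := (2-p)/(2*p-2) with hkdef
  have hne2 : (2*p-2) ≠ 0 := by linarith
  have hnep : p ≠ 0 := by linarith
  have hk : 0 < k := div_pos h2p (by linarith)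
  have hμeq : μ = τ^(2*p-2) * X / Y := (eq_div_iff (ne_of_gt hY)).mpr hμr
  have hβeq : β = (2*p-2) * τ^p / Y := (eq_div_iff (ne_of_gt hY)).mpr hbr
  -- compute μ^k
  have hτk : (τ^(2*p-2)) ^ k = τ^(2-p) := by
    rw [← Real.rpow_mul hτ.le]
    congr 1
    rw [hkdef]
    field_simp
  have hμk : μ ^ k = τ^(2-p) * X^k / Y^k := by
    rw [hμeq, Real.div_rpow (by positivity) hY.le,
        Real.mul_rpow (by positivity) hX.le, hτk]
  -- hypothesis gives p-1 ≤ β μ^k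
  have hq0 : (p - 2) / (2 * (p - 1)) + k = 0 := by
    rw [hkdef]; field_simp; ring
  have hple : p - 1 ≤ β * μ ^ k := by
    have := mul_le_mul_of_nonneg_right hβ (Real.rpow_pos_of_pos hμ0 k).le
    rwa [mul_assoc, ← Real.rpow_add hμ0, hq0, Real.rpow_zero, mul_one] at this
  -- compute β μ^k Y^{1+k}
  have hYk : Y ^ ((1:ℝ)+k) = Y * Y^k := Real.rpow_one_add' hY.le (by positivity)
  have hs2 : τ^p * τ^(2-p) = s := by
    rw [hsdef, ← Real.rpow_add hτ]; ring_nf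
  have hcomp : β * μ^k * Y^((1:ℝ)+k) = (p-1) * (2 * s * X^k) := by
    rw [hβeq, hμk, hYk, div_mul_div_comm, div_mul_cancel₀]
    · linear_combination (2*p-2) * X^k * hs2
    · exact (mul_pos hY (Real.rpow_pos_of_pos hY k)).ne'
  have hineq : Y^((1:ℝ)+k) ≤ 2 * s * X^k := by
    have h := mul_le_mul_of_nonneg_right hple (Real.rpow_pos_of_pos hY ((1:ℝ)+k)).le
    rw [hcomp] at h
    exact le_of_mul_le_mul_left h hp1'
  by_cases hs1 : s = 1
  · -- then τ = 1 and μ = 1, contradiction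
    have hττ : s = τ * τ := by
      rw [hsdef, show (2:ℝ) = 1+1 by norm_num, Real.rpow_add hτ, Real.rpow_one]
    have hττ1 : τ * τ = 1 := by rw [← hττ, hs1]
    have hτ1 : τ = 1 := by
      rcases mul_self_eq_one_iff.mp hττ1 with h' | h'
      · exact h'
      · linarith
    rw [hYdef, hXdef, hs1, hτ1, Real.one_rpow] at hμr
    have : μ = 1 := by linarith [hμr]
    linarith
  · -- strict AM-GM contradiction
    set a := (2*p-2)/p with hadef
    set b := (2-p)/p with hbdef
    have ha : 0 < a := div_pos (by linarith) hppos
    have hb : 0 < b := div_pos h2p hppos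
    have hab : a + b = 1 := by
      rw [hadef, hbdef, ← add_div, show 2*p-2+(2-p) = p by ring, div_self hnep]
    have hxy : 2*s ≠ X := by
      intro h
      apply hs1
      rw [hXdef] at h
      have hps : p * (s - 1) = 0 := by linarith
      rcases mul_eq_zero.mp hps with h' | h'
      · linarith
      · linarith
    have hAM : (2*s)^a * X^b < a*(2*s) + b*X :=
      amgm_strict (by positivity) hX ha hb hab hxy
    have hsum : a*(2*s) + b*X = Y := by
      rw [hadef, hbdef, hXdef, hYdef]; field_simp; ring
    rw [hsum] at hAM
    have hpow := Real.rpow_lt_rpow (by positivity) hAM (show (0:ℝ) < 1/a by positivity)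
    have hL : ((2*s)^a * X^b)^(1/a) = 2*s * X^k := by
      rw [Real.mul_rpow (by positivity) (by positivity),
          ← Real.rpow_mul (by positivity), ← Real.rpow_mul hX.le]
      have h1a : a * (1/a) = 1 := by field_simp
      have hba : b * (1/a) = k := by
        rw [hbdef, hadef, hkdef]; field_simp
      rw [h1a, hba, Real.rpow_one]
    have hR : Y^(1/a) = Y^((1:ℝ)+k) := by
      congr 1
      rw [hadef, hkdef]; field_simp; ring
    rw [hL, hR] at hpow
    linarith
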